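/- Let (k_j, n_j) with k_{j-1} ≤ k_j, n_{j-1} < n_j satisfy the PROVIDENCE condition ω_j(k_j) = σ(k_{j-1}, p_a, p_0, n_{j-1}) · τ_1(k_j - k_{j-1}, p_a, p_0, n_j - n_{j-1}) ≥ 1/α. Then, writing k_min for the least such passing value, Pr[K_j ≥ k_min and K_{j-1} = k_{j-1} | H_0] ≤ α · Pr[K_j ≥ k_min and K_{j-1} = k_{j-1} | H_a], where under hypothesis H (with winner fraction p_0 or p_a) K_{j-1} ~ Bin(n_{j-1}, p) and K_j - K_{j-1} ~ Bin(n_j - n_{j-1}, p) independently. -/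

import Mathlib

open Finset

/-- BRAVO likelihood ratio. -/
noncomputable def sigmaRatio (k n : ℕ) (pa p0 : ℝ) : ℝ :=
  (pa ^ k * (1 - pa) ^ (n - k)) / (p0 ^ k * (1 - p0) ^ (n - k))

/-- Binomial pmf. -/
noncomputable def binPMF (n k : ℕ) (p : ℝ) : ℝ :=
  (n.choose k : ℝ) * p ^ k * (1 - p) ^ (n - k)

/-- Upper tail of the binomial distribution. -/
noncomputable def binTail (k n : ℕ) (p : ℝ) : ℝ :=
  ∑ i ∈ Finset.Icc k n, binPMF n i p

/-- MINERVA/PROVIDENCE first-round tail ratio. -/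
noncomputable def tau1 (k n : ℕ) (pa p0 : ℝ) : ℝ :=
  binTail k n pa / binTail k n p0

lemma binPMF_pos {n k : ℕ} {p : ℝ} (hk : k ≤ n) (hp0 : 0 < p) (hp1 : p < 1) :
    0 < binPMF n k p := by
  have hc : 0 < (n.choose k : ℝ) := by exact_mod_cast Nat.choose_pos hk
  have h1p : 0 < 1 - p := by linarith
  unfold binPMF
  positivity

lemma binTail_pos {k n : ℕ} {p : ℝ} (hk : k ≤ n) (hp0 : 0 < p) (hp1 : p < 1) :
    0 < binTail k n p := by
  unfold binTail
  apply Finset.sum_pos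
  · intro i hi
    exact binPMF_pos (Finset.mem_Icc.mp hi).2 hp0 hp1
  · exact ⟨k, Finset.mem_Icc.mpr ⟨le_refl k, hk⟩⟩

theorem stmt_16 (p0 pa α : ℝ) (kprev nprev nj kmin : ℕ)
    (h0 : 0 < p0) (h1 : p0 < pa) (h2 : pa < 1)
    (hα0 : 0 < α) (hα1 : α < 1)
    (hkprev : kprev ≤ nprev) (hnn : nprev < nj)
    (hkmin : kprev ≤ kmin) (hkmintop : kmin - kprev ≤ nj - nprev)
    (hpass : sigmaRatio kprev nprev pa p0 * tau1 (kmin - kprev) (nj - nprev) pa p0 ≥ 1 / α)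
    (hleast : ∀ c, kprev ≤ c → c < kmin →
      sigmaRatio kprev nprev pa p0 * tau1 (c - kprev) (nj - nprev) pa p0 < 1 / α) :
    binPMF nprev kprev p0 * binTail (kmin - kprev) (nj - nprev) p0 ≤
      α * (binPMF nprev kprev pa * binTail (kmin - kprev) (nj - nprev) pa) := by
  have hpa0 : 0 < pa := lt_trans h0 h1
  have hp01 : p0 < 1 := lt_trans h1 h2
  have hA0 : 0 < binPMF nprev kprev p0 := binPMF_pos hkprev h0 hp01
  have hAa : 0 < binPMF nprev kprev pa := binPMF_pos hkprev hpa0 h2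
  have hT0 : 0 < binTail (kmin - kprev) (nj - nprev) p0 := binTail_pos hkmintop h0 hp01
  have hTa : 0 < binTail (kmin - kprev) (nj - nprev) pa := binTail_pos hkmintop hpa0 h2
  have hc : (0:ℝ) < (nprev.choose kprev : ℝ) := by exact_mod_cast Nat.choose_pos hkprev
  have hsig : sigmaRatio kprev nprev pa p0
      = binPMF nprev kprev pa / binPMF nprev kprev p0 := by
    unfold sigmaRatio binPMF
    rw [mul_assoc, mul_assoc, mul_div_mul_left _ _ (ne_of_gt hc)]
  have key : sigmaRatio kprev nprev pa p0 * tau1 (kmin - kprev) (nj - nprev) pa p0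
      = (binPMF nprev kprev pa * binTail (kmin - kprev) (nj - nprev) pa)
        / (binPMF nprev kprev p0 * binTail (kmin - kprev) (nj - nprev) p0) := by
    rw [hsig]; unfold tau1
    field_simp
  rw [key] at hpass
  rw [ge_iff_le, div_le_div_iff₀ hα0 (by positivity)] at hpass
  nlinarith [hpass]
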